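/- Let H be a linear forest, let G be a graph, and let u, v be two distinct adjacent vertices of G. Let G/uv be the graph obtained from G by contracting the edge uv, i.e., the graph on the vertex set V(G) \ {v} in which two distinct vertices a, b are adjacent if and only if they are adjacent in G, or a = u and b is adjacent to v in G, or b = u and a is adjacent to v in G. If G is H-free, then G/uv is H-free. -/

import Mathlib

/-- A linear forest: an acyclic graph in which every vertex has degree at most 2
(no vertex has three pairwise distinct neighbours). -/
def SimpleGraph.IsLinearForest {V : Type*} (G : SimpleGraph V) : Prop :=
  G.IsAcyclic ∧ ∀ v a b c : V, G.Adj v a → G.Adj v b → G.Adj v c → (a = b ∨ a = c ∨ b = c)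

/-- The contraction `G/uv` of the edge `uv`: the graph on `V(G) \ {v}` in which two
distinct vertices `a, b` are adjacent iff they are adjacent in `G`, or `a = u` and `b`
is adjacent to `v` in `G`, or `b = u` and `a` is adjacent to `v` in `G`. -/
def SimpleGraph.contractEdge {V : Type*} (G : SimpleGraph V) (u v : V) :
    SimpleGraph {x : V // x ≠ v} where
  Adj a b := (a : V) ≠ (b : V) ∧
    (G.Adj a b ∨ ((a : V) = u ∧ G.Adj (b : V) v) ∨ ((b : V) = u ∧ G.Adj (a : V) v))
  symm := by
    constructor
    rintro a b ⟨hne, h⟩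
    refine ⟨hne.symm, ?_⟩
    rcases h with h | ⟨h1, h2⟩ | ⟨h1, h2⟩
    · exact Or.inl h.symm
    · exact Or.inr (Or.inr ⟨h1, h2⟩)
    · exact Or.inr (Or.inl ⟨h1, h2⟩)
  loopless := by
    constructor
    rintro a ⟨hne, -⟩
    exact hne rfl

namespace ContractAux
open scoped Classical
open SimpleGraph Walk

variable {V : Type*} {G : SimpleGraph V} {b x y : V}

noncomputable def sPath (h : G.Reachable b x) : G.Walk b x := (Classical.choice h).toPath

lemma sPath_isPath (h : G.Reachable b x) : (sPath h).IsPath := (Classical.choice h).toPath.2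

lemma path_eq (hG : G.IsAcyclic) (h : G.Reachable b x) {p : G.Walk b x} (hp : p.IsPath) :
    p = sPath h :=
  congrArg Subtype.val (hG.path_unique ⟨p, hp⟩ ((Classical.choice h).toPath))

lemma isPath_concat {w : V} {p : G.Walk b x} (hp : p.IsPath) (h : G.Adj x w)
    (hw : w ∉ p.support) : (p.concat h).IsPath := by
  rw [← isPath_reverse_iff, reverse_concat]
  exact hp.reverse.cons (by rwa [support_reverse, List.mem_reverse])

lemma exists_parent (hG : G.IsAcyclic) (h : G.Reachable b x) (hxb : x ≠ b) :
    ∃ (z : V) (hz : G.Reachable b z) (hadj : G.Adj z x),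
      sPath h = (sPath hz).concat hadj := by
  obtain ⟨c, hadj, q, hpeq⟩ := (not_nil_iff).mp (not_nil_of_ne (Ne.symm hxb) : ¬ (sPath h).Nil)
  obtain ⟨z, r, hadj', hc⟩ := exists_cons_eq_concat hadj q
  rw [hc] at hpeq
  have hr : r.IsPath := by
    have hp := sPath_isPath h
    rw [hpeq, concat_eq_append] at hp
    exact hp.of_append_left
  exact ⟨z, ⟨r⟩, hadj', hpeq.trans (by rw [path_eq hG ⟨r⟩ hr])⟩

lemma adj_parent (hG : G.IsAcyclic) (hx : G.Reachable b x) (hy : G.Reachable b y)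
    (hadj : G.Adj x y) :
    sPath hy = (sPath hx).concat hadj ∨ sPath hx = (sPath hy).concat hadj.symm := by
  by_cases hmem : y ∈ (sPath hx).support
  · right
    have h1 : (sPath hx).takeUntil y hmem = sPath hy :=
      path_eq hG hy ((sPath_isPath hx).takeUntil hmem)
    have h2 : (sPath hx).dropUntil y hmem = cons hadj.symm nil := by
      have hdrop : ((sPath hx).dropUntil y hmem).IsPath := (sPath_isPath hx).dropUntil hmem
      have hsingle : (cons hadj.symm (nil : G.Walk x x)).IsPath :=
        IsPath.nil.cons (by simp [hadj.ne'])
      rw [path_eq hG hadj.symm.reachable hdrop, path_eq hG hadj.symm.reachable hsingle]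
    calc sPath hx = ((sPath hx).takeUntil y hmem).append ((sPath hx).dropUntil y hmem) :=
          (take_spec _ hmem).symm
      _ = (sPath hy).append (cons hadj.symm nil) := by rw [h1, h2]
      _ = (sPath hy).concat hadj.symm := (concat_eq_append _ _).symm
  · left
    exact (path_eq hG (hx.trans hadj.reachable) (isPath_concat (sPath_isPath hx) hadj hmem)).symm

lemma walk_avoids {w : V} (hw : ∀ z, ¬ G.Adj w z) :
    ∀ {x y : V} (p : G.Walk x y), x ≠ w → w ∉ p.support
  | x, _, Walk.nil, hx => by simpa using Ne.symm hx
  | x, y, Walk.cons h q, hx => by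
    simp only [Walk.support_cons, List.mem_cons]
    rintro (rfl | hmem)
    · exact hx rfl
    · exact walk_avoids hw q (fun hc => hw _ (hc ▸ h).symm) hmem

lemma contract_adj {V : Type*} (G : SimpleGraph V) (u v : V) (a c : {x : V // x ≠ v}) :
    (G.contractEdge u v).Adj a c ↔ ((a : V) ≠ (c : V) ∧
      (G.Adj a c ∨ ((a : V) = u ∧ G.Adj (c : V) v) ∨ ((c : V) = u ∧ G.Adj (a : V) v))) :=
  Iff.rfl

end ContractAux

open ContractAux in
/-- contracting an edge of an `H`-free graph, for a linear forest `H`,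
yields an `H`-free graph. -/
theorem contractEdge_Hfree {V W : Type*} (H : SimpleGraph W) (hH : H.IsLinearForest)
    (G : SimpleGraph V) (u v : V) (huv : G.Adj u v)
    (hHfree : ¬ Nonempty (H ↪g G)) :
    ¬ Nonempty (H ↪g G.contractEdge u v) := by
  classical
  rintro ⟨f⟩
  apply hHfree
  obtain ⟨hac, hdeg⟩ := hH
  have hCadj : ∀ {x y : W}, H.Adj x y ↔ ((f x : V) ≠ (f y : V) ∧
      (G.Adj (f x) (f y) ∨ ((f x : V) = u ∧ G.Adj (f y : V) v) ∨
        ((f y : V) = u ∧ G.Adj (f x : V) v))) :=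
    fun {x y} => (f.map_adj_iff).symm.trans (contract_adj G u v (f x) (f y))
  by_cases hu : ∃ w : W, (f w : V) = u
  case neg =>
    push_neg at hu
    have key : ∀ x y : W, G.Adj (f x : V) (f y : V) ↔ H.Adj x y := by
      intro x y
      constructor
      · intro h
        rcases hCadj.mpr ⟨h.ne, Or.inl h⟩ with h'
        exact h'
      · intro h
        rcases hCadj.mp h with ⟨hne, h' | ⟨he, _⟩ | ⟨he, _⟩⟩
        · exact h'
        · exact absurd he (hu x)
        · exact absurd he (hu y)
    exact ⟨⟨⟨fun w => (f w : V), fun x y h => f.injective (Subtype.ext h)⟩,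
      @fun x y => key x y⟩⟩
  obtain ⟨w0, hw0⟩ := hu
  have hfu : ∀ {x : W}, (f x : V) = u → x = w0 :=
    fun {x} hx => f.injective (Subtype.ext (hx.trans hw0.symm))
  have hfu' : ∀ {x : W}, x ≠ w0 → (f x : V) ≠ u := fun {x} hx he => hx (hfu he)
  have C2 : ∀ {x y : W}, x ≠ w0 → y ≠ w0 → (H.Adj x y ↔ G.Adj (f x : V) (f y : V)) := by
    intro x y hx hy
    constructor
    · intro h
      rcases hCadj.mp h with ⟨hne, h' | ⟨he, _⟩ | ⟨he, _⟩⟩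
      · exact h'
      · exact absurd he (hfu' hx)
      · exact absurd he (hfu' hy)
    · intro h
      exact hCadj.mpr ⟨h.ne, Or.inl h⟩
  have C3 : ∀ {y : W}, H.Adj w0 y → G.Adj (f y : V) u ∨ G.Adj (f y : V) v := by
    intro y h
    rcases hCadj.mp h with ⟨hne, h' | ⟨_, h'⟩ | ⟨he, _⟩⟩
    · left; rw [hw0] at h'; exact h'.symm
    · right; exact h'
    · exact absurd (hfu he) h.ne'
  have C3' : ∀ {y : W}, y ≠ w0 → (G.Adj (f y : V) u ∨ G.Adj (f y : V) v) → H.Adj w0 y := by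
    intro y hy hor
    apply hCadj.mpr
    refine ⟨?_, ?_⟩
    · rw [hw0]; exact (hfu' hy).symm
    rcases hor with h | h
    · exact Or.inl (by rw [hw0]; exact h.symm)
    · exact Or.inr (Or.inl ⟨hw0, h⟩)
  by_cases hAllU : ∀ x, H.Adj w0 x → G.Adj (f x : V) u
  case pos =>
    have key : ∀ x y : W, G.Adj (f x : V) (f y : V) ↔ H.Adj x y := by
      intro x y
      constructor
      · intro h
        exact hCadj.mpr ⟨h.ne, Or.inl h⟩
      · intro h
        by_cases hx : x = w0
        · have h2 : G.Adj (f y : V) u := hAllU y (by rw [← hx]; exact h)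
          have h3 : (f x : V) = u := by rw [hx, hw0]
          rw [h3]
          exact h2.symm
        · by_cases hy : y = w0
          · have h2 : G.Adj (f x : V) u := hAllU x (by rw [← hy]; exact h.symm)
            have h3 : (f y : V) = u := by rw [hy, hw0]
            rw [h3]
            exact h2
          · exact (C2 hx hy).mp h
    exact ⟨⟨⟨fun w => (f w : V), fun x y h => f.injective (Subtype.ext h)⟩,
      @fun x y => key x y⟩⟩
  push_neg at hAllU
  obtain ⟨b, hb1, hbu⟩ := hAllU
  have hbv : G.Adj (f b : V) v := (C3 hb1).resolve_left hbu
  by_cases hAllV : ∀ x, H.Adj w0 x → G.Adj (f x : V) v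
  case pos =>
    have ginj : Function.Injective (fun w : W => if w = w0 then v else (f w : V)) := by
      intro x y h
      dsimp only at h
      by_cases hx : x = w0 <;> by_cases hy : y = w0
      · rw [hx, hy]
      · rw [if_pos hx, if_neg hy] at h; exact absurd h.symm (f y).prop
      · rw [if_neg hx, if_pos hy] at h; exact absurd h (f x).prop
      · rw [if_neg hx, if_neg hy] at h; exact f.injective (Subtype.ext h)
    have key : ∀ x y : W,
        G.Adj (if x = w0 then v else (f x : V)) (if y = w0 then v else (f y : V)) ↔
          H.Adj x y := by
      intro x y
      by_cases hx : x = w0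
      · by_cases hy : y = w0
        · rw [if_pos hx, if_pos hy, hx, hy]
          exact iff_of_false (G.loopless.irrefl v) (H.loopless.irrefl w0)
        · rw [if_pos hx, if_neg hy, hx]
          constructor
          · intro h; exact C3' hy (Or.inr h.symm)
          · intro h; exact (hAllV y h).symm
      · by_cases hy : y = w0
        · rw [if_neg hx, if_pos hy, hy]
          constructor
          · intro h; exact (C3' hx (Or.inr h)).symm
          · intro h; exact hAllV x h.symm
        · rw [if_neg hx, if_neg hy]
          exact ((C2 hx hy)).symm
    exact ⟨⟨⟨fun w : W => if w = w0 then v else (f w : V), ginj⟩, @fun x y => key x y⟩⟩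
  push_neg at hAllV
  obtain ⟨a, ha1, hav⟩ := hAllV
  have hau : G.Adj (f a : V) u := (C3 ha1).resolve_right hav
  -- the hard case
  have hab : a ≠ b := fun he => hbu (he ▸ hau)
  have hbw0 : b ≠ w0 := hb1.ne'
  have haw0 : a ≠ w0 := ha1.ne'
  have hnb : ∀ {x : W}, H.Adj w0 x → x = a ∨ x = b := by
    intro x h
    rcases hdeg w0 x a b h ha1 hb1 with h1 | h1 | h1
    · exact Or.inl h1
    · exact Or.inr h1
    · exact absurd h1 hab
  set H' : SimpleGraph W := H.deleteEdges {e | w0 ∈ e} with hH'def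
  have hH'adj : ∀ {x y : W}, H'.Adj x y ↔ (H.Adj x y ∧ x ≠ w0 ∧ y ≠ w0) := by
    intro x y
    rw [hH'def, SimpleGraph.deleteEdges_adj]
    simp only [Set.mem_setOf_eq, Sym2.mem_iff]
    constructor
    · rintro ⟨h, hne⟩
      push_neg at hne
      exact ⟨h, Ne.symm hne.1, Ne.symm hne.2⟩
    · rintro ⟨h, h1, h2⟩
      refine ⟨h, ?_⟩
      push_neg
      exact ⟨Ne.symm h1, Ne.symm h2⟩
  have hH'le : H' ≤ H := SimpleGraph.deleteEdges_le _
  have hH'ac : H'.IsAcyclic := fun x c hc =>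
    hac (c.mapLe hH'le) (SimpleGraph.Walk.IsCycle.mapLe hH'le hc)
  have hw0iso : ∀ z, ¬ H'.Adj w0 z := fun z h => ((hH'adj.mp h).2.1) rfl
  have hw0R : ¬ H'.Reachable b w0 := by
    intro hr
    obtain ⟨p⟩ := hr
    exact walk_avoids hw0iso p hbw0 p.end_mem_support
  have hbR : H'.Reachable b b := SimpleGraph.Reachable.refl b
  have haR : ¬ H'.Reachable b a := by
    intro hr
    have hTrans : ∀ e ∈ (sPath hr).edges, e ∈ H.edgeSet :=
      fun e he => (SimpleGraph.edgeSet_mono hH'le) ((sPath hr).edges_subset_edgeSet he)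
    set q : H.Walk b a := (sPath hr).transfer H hTrans with hqdef
    have hq : q.IsPath := (sPath_isPath hr).transfer hTrans
    have hw0q : w0 ∉ q.support := by
      rw [hqdef, SimpleGraph.Walk.support_transfer]
      exact walk_avoids hw0iso _ hbw0
    have hcpath : (q.concat ha1.symm).IsPath := isPath_concat hq ha1.symm hw0q
    have hedge : s(w0, b) ∉ (q.concat ha1.symm).edges := by
      rw [SimpleGraph.Walk.edges_concat, List.concat_eq_append]
      intro hmem
      rcases List.mem_append.mp hmem with hm | hm
      · exact hw0q (q.fst_mem_support_of_mem_edges hm)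
      · rw [List.mem_singleton] at hm
        rcases Sym2.eq_iff.mp hm with ⟨h1, h2⟩ | ⟨h1, h2⟩
        · exact hbw0 h2
        · exact hab h2.symm
    exact hac _ ((SimpleGraph.Walk.cons_isCycle_iff (q.concat ha1.symm) hb1).mpr
      ⟨hcpath, hedge⟩)
  have hRw0 : ∀ {x : W}, H'.Reachable b x → x ≠ w0 := fun hx he => hw0R (he ▸ hx)
  have hRstep : ∀ {x y : W}, H'.Reachable b x → H.Adj x y → y ≠ w0 → H'.Reachable b y := by
    intro x y hx h hy
    exact hx.trans (SimpleGraph.Adj.reachable (hH'adj.mpr ⟨h, hRw0 hx, hy⟩))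
  have hpar : ∀ x : W, ∃ z : W, ∀ (hx : H'.Reachable b x), x ≠ b →
      ∃ (hz : H'.Reachable b z) (hadj : H'.Adj z x), sPath hx = (sPath hz).concat hadj := by
    intro x
    by_cases hx : H'.Reachable b x
    · by_cases hxb : x = b
      · exact ⟨b, fun _ h => absurd hxb h⟩
      · obtain ⟨z, hz, hadj, he⟩ := exists_parent hH'ac hx hxb
        exact ⟨z, fun _ _ => ⟨hz, hadj, he⟩⟩
    · exact ⟨b, fun hx' _ => absurd hx' hx⟩
  choose σ hσ using hpar
  have hσR : ∀ {x : W} (hx : H'.Reachable b x), x ≠ b → H'.Reachable b (σ x) :=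
    fun {x} hx hxb => (hσ x hx hxb).choose
  have hσadj : ∀ {x : W} (hx : H'.Reachable b x) (hxb : x ≠ b), H'.Adj (σ x) x :=
    fun {x} hx hxb => (hσ x hx hxb).choose_spec.choose
  have hσeq : ∀ {x : W} (hx : H'.Reachable b x) (hxb : x ≠ b),
      sPath hx = (sPath (hσR hx hxb)).concat (hσadj hx hxb) :=
    fun {x} hx hxb => (hσ x hx hxb).choose_spec.choose_spec
  set ℓ : W → ℕ := fun x => if hx : H'.Reachable b x then (sPath hx).length else 0 with hℓdef
  have hℓpos : ∀ {x : W} (hx : H'.Reachable b x), ℓ x = (sPath hx).length := by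
    intro x hx
    simp only [hℓdef]
    exact dif_pos hx
  have hℓσ : ∀ {x : W} (hx : H'.Reachable b x) (hxb : x ≠ b), ℓ (σ x) + 1 = ℓ x := by
    intro x hx hxb
    rw [hℓpos hx, hℓpos (hσR hx hxb), hσeq hx hxb, SimpleGraph.Walk.length_concat]
  have hσuniq : ∀ {x z : W} (hx : H'.Reachable b x) (hxb : x ≠ b)
      (hadj : H'.Adj z x) (hz : H'.Reachable b z),
      sPath hx = (sPath hz).concat hadj → z = σ x := by
    intro x z hx hxb hadj hz he
    have h2 := hσeq hx hxb
    rw [he] at h2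
    obtain ⟨hv, -⟩ := SimpleGraph.Walk.concat_inj h2
    exact hv
  have hstep : ∀ {x y : W} (hx : H'.Reachable b x) (hy : H'.Reachable b y), H'.Adj x y →
      (y ≠ b ∧ σ y = x) ∨ (x ≠ b ∧ σ x = y) := by
    intro x y hx hy hadj
    have hnon : ∀ {c d : W} (hc : H'.Reachable b c) (hd : H'.Reachable b d)
        (h : H'.Adj c d), sPath hd = (sPath hc).concat h → d ≠ b := by
      intro c d hc hd h he hdb
      subst hdb
      have hnil : (sPath hd) = SimpleGraph.Walk.nil :=
        SimpleGraph.Walk.isPath_iff_eq_nil.mp (sPath_isPath hd)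
      rw [hnil] at he
      exact SimpleGraph.Walk.concat_ne_nil _ _ he.symm
    rcases adj_parent hH'ac hx hy hadj with he | he
    · have hyb : y ≠ b := hnon hx hy hadj he
      exact Or.inl ⟨hyb, (hσuniq hy hyb hadj hx he).symm⟩
    · have hxb : x ≠ b := hnon hy hx hadj.symm he
      exact Or.inr ⟨hxb, (hσuniq hx hxb hadj.symm hy he).symm⟩
  have hchild : ∀ {x : W} (hx : H'.Reachable b x), x ≠ b → H.Adj (σ x) x :=
    fun {x} hx hxb => (hH'adj.mp (hσadj hx hxb)).1
  have hσw0 : ∀ {x : W} (hx : H'.Reachable b x), x ≠ b → σ x ≠ w0 :=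
    fun {x} hx hxb => hRw0 (hσR hx hxb)
  have hnbR : ∀ {x : W}, H'.Reachable b x → H.Adj w0 x → x = b := by
    intro x hx h
    rcases hnb h with h1 | h1
    · exact absurd (h1 ▸ hx) haR
    · exact h1
  have hσinj : ∀ {x y : W} (hx : H'.Reachable b x) (hy : H'.Reachable b y),
      x ≠ b → y ≠ b → σ x = σ y → x = y := by
    intro x y hx hy hxb hyb he
    by_contra hxy
    have hax : H.Adj (σ x) x := hchild hx hxb
    have hay : H.Adj (σ x) y := by rw [he]; exact hchild hy hyb
    have hzR : H'.Reachable b (σ x) := hσR hx hxb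
    by_cases hzb : σ x = b
    · have hbx : H.Adj b x := hzb ▸ hax
      have hby : H.Adj b y := hzb ▸ hay
      rcases hdeg b x y w0 hbx hby hb1.symm with h1 | h1 | h1
      · exact hxy h1
      · exact hw0R (h1 ▸ hx)
      · exact hw0R (h1 ▸ hy)
    · have hzpar : H.Adj (σ x) (σ (σ x)) := (hchild hzR hzb).symm
      rcases hdeg (σ x) x y (σ (σ x)) hax hay hzpar with h1 | h1 | h1
      · exact hxy h1
      · have l1 := hℓσ hx hxb
        have l2 := hℓσ hzR hzb
        rw [← h1] at l2
        omega
      · have l1 := hℓσ hy hyb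
        rw [← he] at l1
        have l2 := hℓσ hzR hzb
        rw [← h1] at l2
        omega
  have hadjS : ∀ {x y : W} (hx : H'.Reachable b x) (hy : H'.Reachable b y),
      x ≠ b → y ≠ b → H.Adj x y → H.Adj (σ x) (σ y) := by
    intro x y hx hy hxb hyb h
    rcases hstep hx hy (hH'adj.mpr ⟨h, hRw0 hx, hRw0 hy⟩) with ⟨_, h1⟩ | ⟨_, h1⟩
    · rw [h1]; exact hchild hx hxb
    · rw [h1]; exact (hchild hy hyb).symm
  have hkey : ∀ {x y : W} (hx : H'.Reachable b x) (hy : H'.Reachable b y)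
      (hxb : x ≠ b) (hyb : y ≠ b) (h : H.Adj (σ x) (σ y)),
      σ (σ y) = σ x → σ y ≠ b → x = σ y := by
    intro x y hx hy hxb hyb h h1 hb2
    have hzx : H'.Reachable b (σ x) := hσR hx hxb
    have hzy : H'.Reachable b (σ y) := hσR hy hyb
    by_cases hzxb : σ x = b
    · have h3 := hdeg (σ x) x (σ y) w0 (hchild hx hxb) h
        (by rw [hzxb]; exact hb1.symm)
      rcases h3 with h4 | h4 | h4
      · exact h4
      · exact absurd h4 (hRw0 hx)
      · exact absurd h4 (hRw0 hzy)
    · have hzz : H.Adj (σ (σ x)) (σ x) := hchild hzx hzxb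
      rcases hdeg (σ x) x (σ y) (σ (σ x)) (hchild hx hxb) h hzz.symm with h4 | h4 | h4
      · exact h4
      · have l1 := hℓσ hx hxb
        have l2 := hℓσ hzx hzxb
        rw [← h4] at l2
        omega
      · have l1 := hℓσ hzy hb2
        rw [h1] at l1
        have l2 := hℓσ hzx hzxb
        rw [← h4] at l2
        omega
  have hadjS' : ∀ {x y : W} (hx : H'.Reachable b x) (hy : H'.Reachable b y),
      x ≠ b → y ≠ b → H.Adj (σ x) (σ y) → H.Adj x y := by
    intro x y hx hy hxb hyb h
    have hzx : H'.Reachable b (σ x) := hσR hx hxb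
    have hzy : H'.Reachable b (σ y) := hσR hy hyb
    rcases hstep hzx hzy (hH'adj.mpr ⟨h, hRw0 hzx, hRw0 hzy⟩) with ⟨hb2, h1⟩ | ⟨hb2, h1⟩
    · have h4 : x = σ y := hkey hx hy hxb hyb h h1 hb2
      rw [h4]; exact hchild hy hyb
    · have h4 : y = σ x := hkey hy hx hyb hxb h.symm h1 hb2
      rw [h4]; exact (hchild hx hxb).symm
  -- the shifted embedding
  set g : W → V := fun x => if x = w0 then u else
    (if H'.Reachable b x then (if x = b then v else (f (σ x) : V)) else (f x : V))
    with hgdef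
  have hgx : ∀ x : W, g x = if x = w0 then u else
      (if H'.Reachable b x then (if x = b then v else (f (σ x) : V)) else (f x : V)) :=
    fun x => rfl
  have hg_w0 : g w0 = u := by rw [hgx, if_pos rfl]
  have hg_b : g b = v := by rw [hgx, if_neg hbw0, if_pos hbR, if_pos rfl]
  have hg_S : ∀ {x : W}, H'.Reachable b x → x ≠ b → g x = (f (σ x) : V) := by
    intro x hx hxb
    rw [hgx, if_neg (hRw0 hx), if_pos hx, if_neg hxb]
  have hg_T : ∀ {x : W}, ¬ H'.Reachable b x → x ≠ w0 → g x = (f x : V) := by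
    intro x hx hxw0
    rw [hgx, if_neg hxw0, if_neg hx]
  have gval : ∀ x : W, (x = w0 ∧ g x = u) ∨ (x = b ∧ g x = v) ∨
      (x ≠ w0 ∧ x ≠ b ∧ H'.Reachable b x ∧ g x = (f (σ x) : V)) ∨
      (x ≠ w0 ∧ ¬ H'.Reachable b x ∧ g x = (f x : V)) := by
    intro x
    by_cases h0 : x = w0
    · exact Or.inl ⟨h0, h0 ▸ hg_w0⟩
    by_cases hb0 : x = b
    · exact Or.inr (Or.inl ⟨hb0, hb0 ▸ hg_b⟩)
    by_cases hR : H'.Reachable b x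
    · exact Or.inr (Or.inr (Or.inl ⟨h0, hb0, hR, hg_S hR hb0⟩))
    · exact Or.inr (Or.inr (Or.inr ⟨h0, hR, hg_T hR h0⟩))
  have ginj : Function.Injective g := by
    intro x y he
    rcases gval x with ⟨hx1, hx2⟩ | ⟨hx1, hx2⟩ | ⟨hx1, hx1b, hxR, hx2⟩ | ⟨hx1, hxR, hx2⟩ <;>
      rcases gval y with ⟨hy1, hy2⟩ | ⟨hy1, hy2⟩ | ⟨hy1, hy1b, hyR, hy2⟩ | ⟨hy1, hyR, hy2⟩ <;>
      rw [hx2, hy2] at he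
    · exact hx1.trans hy1.symm
    · exact absurd he huv.ne
    · exact absurd he.symm (hfu' (hσw0 hyR hy1b))
    · exact absurd he.symm (hfu' hy1)
    · exact absurd he.symm huv.ne
    · exact hx1.trans hy1.symm
    · exact absurd he.symm (f (σ y)).prop
    · exact absurd he.symm (f y).prop
    · exact absurd he (hfu' (hσw0 hxR hx1b))
    · exact absurd he (f (σ x)).prop
    · exact hσinj hxR hyR hx1b hy1b (f.injective (Subtype.ext he))
    · have h4 : σ x = y := f.injective (Subtype.ext he)
      subst h4
      exact absurd (hσR hxR hx1b) hyR
    · exact absurd he (hfu' hx1)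
    · exact absurd he (f x).prop
    · have h4 : x = σ y := f.injective (Subtype.ext he)
      subst h4
      exact absurd (hσR hyR hy1b) hxR
    · exact f.injective (Subtype.ext he)
  have P1 : ∀ x y : W, H.Adj x y → G.Adj (g x) (g y) := by
    intro x y h
    rcases gval x with ⟨hx1, hx2⟩ | ⟨hx1, hx2⟩ | ⟨hx1, hx1b, hxR, hx2⟩ | ⟨hx1, hxR, hx2⟩ <;>
      rcases gval y with ⟨hy1, hy2⟩ | ⟨hy1, hy2⟩ | ⟨hy1, hy1b, hyR, hy2⟩ | ⟨hy1, hyR, hy2⟩ <;>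
      rw [hx2, hy2]
    · rw [hx1, hy1] at h; exact absurd h (H.loopless.irrefl w0)
    · exact huv
    · rw [hx1] at h
      exact absurd (hnbR hyR h) hy1b
    · rw [hx1] at h
      rcases hnb h with h1 | h1
      · rw [h1]; exact hau.symm
      · rw [h1] at hyR; exact absurd hbR hyR
    · exact huv.symm
    · rw [hx1, hy1] at h; exact absurd h (H.loopless.irrefl b)
    · rw [hx1] at h
      have h5 : σ y = b := by
        rcases hstep hbR hyR (hH'adj.mpr ⟨h, hbw0, hRw0 hyR⟩) with ⟨_, h6⟩ | ⟨h6, _⟩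
        · exact h6
        · exact absurd rfl h6
      rw [h5]
      exact hbv.symm
    · rw [hx1] at h
      exact absurd (hRstep hbR h hy1) hyR
    · rw [hy1] at h
      exact absurd (hnbR hxR h.symm) hx1b
    · rw [hy1] at h
      have h5 : σ x = b := by
        rcases hstep hbR hxR (hH'adj.mpr ⟨h.symm, hbw0, hRw0 hxR⟩) with ⟨_, h6⟩ | ⟨h6, _⟩
        · exact h6
        · exact absurd rfl h6
      rw [h5]
      exact hbv
    · exact (C2 (hσw0 hxR hx1b) (hσw0 hyR hy1b)).mp (hadjS hxR hyR hx1b hy1b h)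
    · exact absurd (hRstep hxR h hy1) hyR
    · rw [hy1] at h
      rcases hnb h.symm with h1 | h1
      · rw [h1]; exact hau
      · rw [h1] at hxR; exact absurd hbR hxR
    · rw [hy1] at h
      exact absurd (hRstep hbR h.symm hx1) hxR
    · exact absurd (hRstep hyR h.symm hx1) hxR
    · exact (C2 hx1 hy1).mp h
  have P2 : ∀ x y : W, x ≠ y → ¬ H.Adj x y → ¬ G.Adj (g x) (g y) := by
    intro x y hxy hn hg
    rcases gval x with ⟨hx1, hx2⟩ | ⟨hx1, hx2⟩ | ⟨hx1, hx1b, hxR, hx2⟩ | ⟨hx1, hxR, hx2⟩ <;>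
      rcases gval y with ⟨hy1, hy2⟩ | ⟨hy1, hy2⟩ | ⟨hy1, hy1b, hyR, hy2⟩ | ⟨hy1, hyR, hy2⟩ <;>
      rw [hx2, hy2] at hg
    · exact hxy (hx1.trans hy1.symm)
    · rw [hx1, hy1] at hn; exact hn hb1
    · have h5 : σ y = b := hnbR (hσR hyR hy1b) (C3' (hσw0 hyR hy1b) (Or.inl hg.symm))
      rw [h5] at hg
      exact hbu hg.symm
    · rw [hx1] at hn
      exact hn (C3' hy1 (Or.inl hg.symm))
    · rw [hx1, hy1] at hn; exact hn hb1.symm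
    · exact hxy (hx1.trans hy1.symm)
    · rw [hx1] at hn
      have h5 : σ y = b := hnbR (hσR hyR hy1b) (C3' (hσw0 hyR hy1b) (Or.inr hg.symm))
      have h6 : H.Adj b y := by rw [← h5]; exact hchild hyR hy1b
      exact hn h6
    · have h5 := C3' hy1 (Or.inr hg.symm)
      rcases hnb h5 with h1 | h1
      · rw [h1] at hg; exact hav hg.symm
      · rw [h1] at hyR; exact absurd hbR hyR
    · have h5 : σ x = b := hnbR (hσR hxR hx1b) (C3' (hσw0 hxR hx1b) (Or.inl hg))
      rw [h5] at hg
      exact hbu hg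
    · rw [hy1] at hn
      have h5 : σ x = b := hnbR (hσR hxR hx1b) (C3' (hσw0 hxR hx1b) (Or.inr hg))
      have h6 : H.Adj b x := by rw [← h5]; exact hchild hxR hx1b
      exact hn h6.symm
    · exact hn (hadjS' hxR hyR hx1b hy1b
        ((C2 (hσw0 hxR hx1b) (hσw0 hyR hy1b)).mpr hg))
    · have h5 : H.Adj (σ x) y := (C2 (hσw0 hxR hx1b) hy1).mpr hg
      exact hyR (hRstep (hσR hxR hx1b) h5 hy1)
    · rw [hy1] at hn
      exact hn (C3' hx1 (Or.inl hg)).symm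
    · have h5 := C3' hx1 (Or.inr hg)
      rcases hnb h5 with h1 | h1
      · rw [h1] at hg; exact hav hg
      · rw [h1] at hxR; exact absurd hbR hxR
    · have h5 : H.Adj x (σ y) := (C2 hx1 (hσw0 hyR hy1b)).mpr hg
      exact hxR (hRstep (hσR hyR hy1b) h5.symm hx1)
    · exact hn ((C2 hx1 hy1).mpr hg)
  have key : ∀ x y : W, G.Adj (g x) (g y) ↔ H.Adj x y := by
    intro x y
    constructor
    · intro hg
      by_cases hxy : x = y
      · subst hxy; exact absurd hg (G.loopless.irrefl _)
      · by_contra hn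
        exact P2 x y hxy hn hg
    · exact P1 x y
  exact ⟨⟨⟨g, ginj⟩, @fun x y => key x y⟩⟩
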